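/- Let q be a holomorphic function on ℂ ∖ {0, 1} such that the functions z·q(z) (near 0), (z−1)·q(z) (near 1), and z³·q(z) (near ∞) are all bounded; that is, there exist C > 0 and r > 0 with |z·q(z)| ≤ C for 0 < |z| < r, |(z−1)·q(z)| ≤ C for 0 < |z−1| < r, and |z³·q(z)| ≤ C for |z| > 1/r. Then q is identically zero. -/

import Mathlib

open Filter Topology Complex Function

/-- Let `q` be holomorphic on `ℂ ∖ {0, 1}` with `z·q(z)` bounded near `0`,
`(z−1)·q(z)` bounded near `1`, and `z³·q(z)` bounded near `∞`; i.e. there are `C > 0` and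
`r > 0` with `|z·q(z)| ≤ C` for `0 < |z| < r`, `|(z−1)·q(z)| ≤ C` for `0 < |z−1| < r`,
and `|z³·q(z)| ≤ C` for `|z| > 1/r`.  Then `q` is identically zero on `ℂ ∖ {0,1}`. -/
theorem no_quadratic_differentials (q : ℂ → ℂ)
    (hq : DifferentiableOn ℂ q (({0, 1} : Set ℂ)ᶜ))
    (C r : ℝ) (hC : 0 < C) (hr : 0 < r)
    (h0 : ∀ z : ℂ, 0 < ‖z‖ → ‖z‖ < r →
      ‖z * q z‖ ≤ C)
    (h1 : ∀ z : ℂ, 0 < ‖z - 1‖ → ‖z - 1‖ < r →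
      ‖(z - 1) * q z‖ ≤ C)
    (hinf : ∀ z : ℂ, 1 / r < ‖z‖ → ‖z ^ 3 * q z‖ ≤ C) :
    ∀ z ∈ (({0, 1} : Set ℂ)ᶜ), q z = 0 := by
  set g : ℂ → ℂ := fun z => z * (z - 1) * q z with hg_def
  have hg_diff : DifferentiableOn ℂ g (({0, 1} : Set ℂ)ᶜ) := by
    exact ((differentiableOn_id.mul (differentiableOn_id.sub_const 1)).mul hq)
  -- g is bounded near 0 by 2C
  have hb0 : ∀ z : ℂ, 0 < ‖z‖ → ‖z‖ < min r 1 → ‖g z‖ ≤ 2 * C := by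
    intro z hz1 hz2
    have hzr : ‖z‖ < r := lt_of_lt_of_le hz2 (min_le_left _ _)
    have hz1' : ‖z‖ < 1 := lt_of_lt_of_le hz2 (min_le_right _ _)
    have : ‖g z‖ = ‖z - 1‖ * ‖z * q z‖ := by
      simp only [hg_def]
      rw [show z * (z - 1) * q z = (z - 1) * (z * q z) by ring, norm_mul]
    rw [this]
    have hzb : ‖z - 1‖ ≤ 2 := by
      have := norm_sub_le z 1
      simp only [norm_one] at this
      linarith
    exact mul_le_mul hzb (h0 z hz1 hzr) (norm_nonneg _) (by norm_num)
  -- g is bounded near 1 by 2C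
  have hb1 : ∀ z : ℂ, 0 < ‖z - 1‖ → ‖z - 1‖ < min r 1 →
      ‖g z‖ ≤ 2 * C := by
    intro z hz1 hz2
    have hzr : ‖z - 1‖ < r := lt_of_lt_of_le hz2 (min_le_left _ _)
    have hz1' : ‖z - 1‖ < 1 := lt_of_lt_of_le hz2 (min_le_right _ _)
    have : ‖g z‖ = ‖z‖ * ‖(z - 1) * q z‖ := by
      simp only [hg_def]
      rw [show z * (z - 1) * q z = z * ((z - 1) * q z) by ring, norm_mul]
    rw [this]
    have hzb : ‖z‖ ≤ 2 := by
      have h' : ‖z‖ = ‖(z - 1) + 1‖ := by ring_nf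
      have h'' := norm_add_le (z - 1) 1
      simp only [norm_one] at h''
      linarith
    exact mul_le_mul hzb (h1 z hz1 hzr) (norm_nonneg _) (by norm_num)
  -- g 0 = 0 and g 1 = 0 trivially
  have hg0 : g 0 = 0 := by simp [hg_def]
  have hg1 : g 1 = 0 := by simp [hg_def]
  -- remove singularity at 0
  have ho0 : (fun z => g z - g 0) =o[𝓝[≠] (0:ℂ)] fun z => (z - 0)⁻¹ := by
    apply Filter.IsBoundedUnder.isLittleO_sub_self_inv
    refine ⟨2 * C, eventually_map.2 ?_⟩
    filter_upwards [self_mem_nhdsWithin,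
      inter_mem_nhdsWithin _ (Metric.ball_mem_nhds (0:ℂ) (lt_min hr one_pos))] with z hz hz'
    have hz0 : z ≠ 0 := hz
    have : ‖z‖ < min r 1 := by
      simpa [Complex.dist_eq] using hz'.2
    simpa [hg0] using hb0 z (by simpa using hz0) this
  have ho1 : (fun z => g z - g 1) =o[𝓝[≠] (1:ℂ)] fun z => (z - 1)⁻¹ := by
    apply Filter.IsBoundedUnder.isLittleO_sub_self_inv
    refine ⟨2 * C, eventually_map.2 ?_⟩
    filter_upwards [self_mem_nhdsWithin,
      inter_mem_nhdsWithin _ (Metric.ball_mem_nhds (1:ℂ) (lt_min hr one_pos))] with z hz hz'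
    have hz1 : z ≠ 1 := hz
    have habs : ‖z - 1‖ < min r 1 := by
      simpa [Complex.dist_eq] using hz'.2
    have hpos : 0 < ‖z - 1‖ := by
      simpa using sub_ne_zero.mpr hz1
    simpa [hg1] using hb1 z hpos habs
  -- first removable singularity at 0 on the set {1}ᶜ
  have hs0 : ({1}ᶜ : Set ℂ) ∈ 𝓝 (0:ℂ) := by
    apply IsOpen.mem_nhds isOpen_compl_singleton
    simp
  have hdiff0 : DifferentiableOn ℂ g (({1}ᶜ : Set ℂ) \ {0}) := by
    apply hg_diff.mono
    intro z hz
    simp only [Set.mem_compl_iff, Set.mem_insert_iff, Set.mem_singleton_iff]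
    rintro (h | h)
    · exact hz.2 h
    · exact hz.1 h
  set G0 : ℂ → ℂ := update g 0 (limUnder (𝓝[≠] (0:ℂ)) g) with hG0_def
  have hG0 : DifferentiableOn ℂ G0 ({1}ᶜ : Set ℂ) :=
    Complex.differentiableOn_update_limUnder_of_isLittleO hs0 hdiff0 ho0
  -- second removable singularity at 1 on univ
  have hG0eq : ∀ z : ℂ, z ≠ 0 → G0 z = g z := by
    intro z hz
    simp [hG0_def, update_of_ne hz]
  have hs1 : (Set.univ : Set ℂ) ∈ 𝓝 (1:ℂ) := univ_mem
  have hdiff1 : DifferentiableOn ℂ G0 ((Set.univ : Set ℂ) \ {1}) := by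
    apply hG0.mono
    intro z hz
    exact hz.2
  have ho1' : (fun z => G0 z - G0 1) =o[𝓝[≠] (1:ℂ)] fun z => (z - 1)⁻¹ := by
    have hev : (fun z => G0 z - G0 1) =ᶠ[𝓝[≠] (1:ℂ)] (fun z => g z - g 1) := by
      filter_upwards [self_mem_nhdsWithin,
        inter_mem_nhdsWithin _ (Metric.ball_mem_nhds (1:ℂ) one_pos)] with z hz hz'
      have hz1 : z ≠ 1 := hz
      have hz0 : z ≠ 0 := by
        intro h
        subst h
        norm_num [Complex.dist_eq] at hz'
      rw [hG0eq z hz0, hG0_def, update_of_ne one_ne_zero, hg1]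
    exact (ho1.congr' hev.symm (EventuallyEq.refl _ _))
  set G : ℂ → ℂ := update G0 1 (limUnder (𝓝[≠] (1:ℂ)) G0) with hG_def
  have hG : Differentiable ℂ G := by
    have := Complex.differentiableOn_update_limUnder_of_isLittleO hs1 hdiff1 ho1'
    rw [← differentiableOn_univ]
    exact this
  have hGeq : ∀ z : ℂ, z ≠ 0 → z ≠ 1 → G z = g z := by
    intro z hz0 hz1
    rw [hG_def, update_of_ne hz1, hG0eq z hz0]
  -- G tends to 0 at cocompact
  have htend : Tendsto G (cocompact ℂ) (𝓝 0) := by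
    have hnorm : ∀ z : ℂ, max (1/r) 2 < ‖z‖ → ‖G z‖ ≤ 2 * C / ‖z‖ := by
      intro z hz
      have hz2 : (2:ℝ) < ‖z‖ := lt_of_le_of_lt (le_max_right _ _) hz
      have hzr : 1/r < ‖z‖ := lt_of_le_of_lt (le_max_left _ _) hz
      have hz0 : z ≠ 0 := by
        intro h; subst h; norm_num at hz2
      have hz1 : z ≠ 1 := by
        intro h; subst h; norm_num at hz2
      rw [hGeq z hz0 hz1]
      have hzpos : (0:ℝ) < ‖z‖ := by positivity
      have key : g z = (z * (z-1) / z^3) * (z^3 * q z) := by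
        field_simp
        simp only [hg_def]
      rw [key, norm_mul, norm_div, norm_mul, norm_pow]
      have h1b : ‖z - 1‖ ≤ 2 * ‖z‖ := by
        have := norm_sub_le z 1
        simp only [norm_one] at this
        linarith
      calc ‖z‖ * ‖z - 1‖ / ‖z‖ ^ 3 * ‖z ^ 3 * q z‖
          ≤ ‖z‖ * (2 * ‖z‖) / ‖z‖ ^ 3 * C := by
            apply mul_le_mul
            · apply div_le_div_of_nonneg_right _ (by positivity)
              exact mul_le_mul_of_nonneg_left h1b (norm_nonneg z)
            · exact hinf z hzr
            · exact norm_nonneg _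
            · positivity
        _ = 2 * C / ‖z‖ := by
            field_simp
    have hlim : Tendsto (fun z : ℂ => 2 * C / ‖z‖) (cocompact ℂ) (𝓝 0) := by
      have : Tendsto (fun z : ℂ => ‖z‖) (cocompact ℂ) atTop := by
        simpa using tendsto_norm_cocompact_atTop (E := ℂ)
      simpa using Tendsto.div_atTop (tendsto_const_nhds (x := 2 * C)) this
    apply squeeze_zero_norm' _ hlim
    have : ∀ᶠ z : ℂ in cocompact ℂ, max (1/r) 2 < ‖z‖ := by
      have : Tendsto (fun z : ℂ => ‖z‖) (cocompact ℂ) atTop := by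
        simpa using tendsto_norm_cocompact_atTop (E := ℂ)
      exact this.eventually_gt_atTop _
    filter_upwards [this] with z hz
    exact hnorm z hz
  -- Liouville: G ≡ 0
  have hGzero : ∀ z : ℂ, G z = 0 := fun z => hG.apply_eq_of_tendsto_cocompact z htend
  intro z hz
  simp only [Set.mem_compl_iff, Set.mem_insert_iff, Set.mem_singleton_iff, not_or] at hz
  obtain ⟨hz0, hz1⟩ := hz
  have := hGzero z
  rw [hGeq z hz0 hz1] at this
  have hzne : z * (z - 1) ≠ 0 := mul_ne_zero hz0 (sub_ne_zero.mpr hz1)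
  exact (mul_eq_zero.mp this).resolve_left hzne
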